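/- Let X, Y, Z be Banach spaces, T ∈ B(X,Y), S ∈ B(Y,Z), with T, S, and S∘T regular. If T and S are generalized Weyl operators (i.e., ker T ≅ Y/R(T) and ker S ≅ Z/R(S) as Banach spaces via bounded isomorphisms of complements), then S∘T is a generalized Weyl operator. -/

import Mathlib

section

variable {X Y : Type*} [NormedAddCommGroup X] [NormedSpace ℝ X]
  [NormedAddCommGroup Y] [NormedSpace ℝ Y]

/-- An operator is *regular* if it admits a bounded generalized inverse. -/
def IsRegularOp (T : X →L[ℝ] Y) : Prop :=
  ∃ U : Y →L[ℝ] X, ∀ x, T (U (T x)) = T x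

/-- A regular operator is a *generalized Weyl operator* if some closed complement of its range
is isomorphic, via a bounded linear isomorphism, to its kernel. -/
def IsGeneralizedWeyl (T : X →L[ℝ] Y) : Prop :=
  IsRegularOp T ∧
    ∃ N : Submodule ℝ Y, IsClosed (N : Set Y) ∧ IsCompl (LinearMap.range (T : X →ₗ[ℝ] Y)) N ∧
      Nonempty (↥(LinearMap.ker (T : X →ₗ[ℝ] Y)) ≃L[ℝ] ↥N)

end

section Aux

variable {E F : Type*} [NormedAddCommGroup E] [NormedSpace ℝ E]
  [NormedAddCommGroup F] [NormedSpace ℝ F]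

/-- From a generalized inverse we can build a reflexive generalized inverse. -/
lemma exists_reflexive_inverse (T : E →L[ℝ] F) (h : IsRegularOp T) :
    ∃ U : F →L[ℝ] E, (∀ x, T (U (T x)) = T x) ∧ (∀ y, U (T (U y)) = U y) := by
  obtain ⟨U₀, hU₀⟩ := h
  refine ⟨U₀.comp (T.comp U₀), fun x => ?_, fun y => ?_⟩ <;>
    simp only [ContinuousLinearMap.comp_apply]
  · rw [hU₀ (U₀ (T x)), hU₀ x]
  · rw [hU₀ (U₀ (T (U₀ y))), hU₀ (U₀ y)]

lemma range_isClosed_of_regular (T : E →L[ℝ] F) (U : F →L[ℝ] E)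
    (h : ∀ x, T (U (T x)) = T x) :
    IsClosed ((LinearMap.range (T : E →ₗ[ℝ] F) : Submodule ℝ F) : Set F) := by
  have : (LinearMap.range (T : E →ₗ[ℝ] F) : Submodule ℝ F)
      = LinearMap.ker ((T.comp U - ContinuousLinearMap.id ℝ F : F →L[ℝ] F) : F →ₗ[ℝ] F) := by
    ext y
    simp only [LinearMap.mem_range, LinearMap.mem_ker, ContinuousLinearMap.coe_coe, ContinuousLinearMap.coe_sub',
      Pi.sub_apply, ContinuousLinearMap.comp_apply, ContinuousLinearMap.id_apply,
      sub_eq_zero]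
    constructor
    · rintro ⟨x, rfl⟩; exact h x
    · intro hy; exact ⟨U y, hy⟩
  rw [this]
  exact ContinuousLinearMap.isClosed_ker _

end Aux

set_option maxHeartbeats 2000000 in
/-- If `T, S, S∘T` are regular and `T` and `S` are generalized Weyl operators,
then `S∘T` is a generalized Weyl operator. -/
theorem generalizedWeyl_comp
    {X Y Z : Type*} [NormedAddCommGroup X] [NormedSpace ℝ X] [CompleteSpace X]
    [NormedAddCommGroup Y] [NormedSpace ℝ Y] [CompleteSpace Y]
    [NormedAddCommGroup Z] [NormedSpace ℝ Z] [CompleteSpace Z]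
    (T : X →L[ℝ] Y) (S : Y →L[ℝ] Z)
    (hT : IsRegularOp T) (hS : IsRegularOp S) (hST : IsRegularOp (S.comp T))
    (hTW : IsGeneralizedWeyl T) (hSW : IsGeneralizedWeyl S) :
    IsGeneralizedWeyl (S.comp T) := by
  classical
  obtain ⟨U, hU1, hU2⟩ := exists_reflexive_inverse T hT
  obtain ⟨V, hV1, hV2⟩ := exists_reflexive_inverse S hS
  obtain ⟨W, hW1, hW2⟩ := exists_reflexive_inverse (S.comp T) hST
  have hW1' : ∀ x, S (T (W (S (T x)))) = S (T x) := fun x => by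
    simpa using hW1 x
  have hW2' : ∀ z, W (S (T (W z))) = W z := fun z => by
    simpa using hW2 z
  obtain ⟨-, NT, hNTc, hNTcompl, ⟨iT⟩⟩ := hTW
  obtain ⟨-, NS, hNSc, hNScompl, ⟨iS⟩⟩ := hSW
  have hRTc : IsClosed ((LinearMap.range (T : X →ₗ[ℝ] Y) : Submodule ℝ Y) : Set Y) :=
    range_isClosed_of_regular T U hU1
  have hRSc : IsClosed ((LinearMap.range (S : Y →ₗ[ℝ] Z) : Submodule ℝ Z) : Set Z) :=
    range_isClosed_of_regular S V hV1
  have hTU : ∀ y ∈ LinearMap.range (T : X →ₗ[ℝ] Y), T (U y) = y := by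
    rintro y ⟨x, rfl⟩; exact hU1 x
  have hSV : ∀ z ∈ LinearMap.range (S : Y →ₗ[ℝ] Z), S (V z) = z := by
    rintro z ⟨y, rfl⟩; exact hV1 y
  -- the three idempotents
  set e : Y →L[ℝ] Y := T ∘L (W ∘L S) with he_def
  set q : Y →L[ℝ] Y := V ∘L S with hq_def
  set f : Z →L[ℝ] Z := S ∘L (T ∘L W) with hf_def
  have he : ∀ y, e y = T (W (S y)) := fun y => rfl
  have hq : ∀ y, q y = V (S y) := fun y => rfl
  have hf : ∀ z, f z = S (T (W z)) := fun z => rfl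
  have he2 : ∀ y, e (e y) = e y := fun y => congrArg T (hW2' (S y))
  have hf2 : ∀ z, f (f z) = f z := fun z => congrArg S (congrArg T (hW2' z))
  -- continuous projections coming from the given complements
  set pT : Y →L[ℝ] Y :=
    (LinearMap.range (T : X →ₗ[ℝ] Y)).subtypeL ∘L
      ((LinearMap.range (T : X →ₗ[ℝ] Y)).linearProjOfClosedCompl NT hNTcompl hRTc hNTc) with hpT_def
  have hpT_eq : ∀ y, pT y =
      ((LinearMap.range (T : X →ₗ[ℝ] Y)).linearProjOfIsCompl NT hNTcompl y : Y) := fun y => by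
    rw [hpT_def]
    simp [Submodule.coe_continuous_linearProjOfClosedCompl']
    rfl
  have hpTmem : ∀ y, pT y ∈ LinearMap.range (T : X →ₗ[ℝ] Y) := fun y => by
    rw [hpT_eq]; exact Submodule.coe_mem _
  have hpTleft : ∀ y ∈ LinearMap.range (T : X →ₗ[ℝ] Y), pT y = y := fun y hy => by
    rw [hpT_eq]
    exact congrArg Subtype.val (Submodule.linearProjOfIsCompl_apply_left hNTcompl ⟨y, hy⟩)
  have hpTN : ∀ y, y - pT y ∈ NT := fun y => by
    rw [hpT_eq]
    have := Submodule.projection_add_projection_eq_self hNTcompl y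
    have h2 : y - ((LinearMap.range (T : X →ₗ[ℝ] Y)).linearProjOfIsCompl NT hNTcompl y : Y)
        = (NT.linearProjOfIsCompl _ hNTcompl.symm y : Y) :=
      sub_eq_iff_eq_add'.mpr this.symm
    rw [h2]; exact Submodule.coe_mem _
  set rS : Z →L[ℝ] Z :=
    (LinearMap.range (S : Y →ₗ[ℝ] Z)).subtypeL ∘L
      ((LinearMap.range (S : Y →ₗ[ℝ] Z)).linearProjOfClosedCompl NS hNScompl hRSc hNSc) with hrS_def
  have hrS_eq : ∀ z, rS z =
      ((LinearMap.range (S : Y →ₗ[ℝ] Z)).linearProjOfIsCompl NS hNScompl z : Z) := fun z => by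
    rw [hrS_def]
    simp [Submodule.coe_continuous_linearProjOfClosedCompl']
    rfl
  have hrSmem : ∀ z, rS z ∈ LinearMap.range (S : Y →ₗ[ℝ] Z) := fun z => by
    rw [hrS_eq]; exact Submodule.coe_mem _
  have hrSleft : ∀ z ∈ LinearMap.range (S : Y →ₗ[ℝ] Z), rS z = z := fun z hz => by
    rw [hrS_eq]
    exact congrArg Subtype.val (Submodule.linearProjOfIsCompl_apply_left hNScompl ⟨z, hz⟩)
  have hrSright : ∀ z ∈ NS, rS z = 0 := fun z hz => by
    rw [hrS_eq]
    have := Submodule.linearProjOfIsCompl_apply_right' hNScompl hz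
    exact congrArg Subtype.val this
  have hrSN : ∀ z, z - rS z ∈ NS := fun z => by
    rw [hrS_eq]
    have := Submodule.projection_add_projection_eq_self hNScompl z
    have h2 : z - ((LinearMap.range (S : Y →ₗ[ℝ] Z)).linearProjOfIsCompl NS hNScompl z : Z)
        = (NS.linearProjOfIsCompl _ hNScompl.symm z : Z) :=
      sub_eq_iff_eq_add'.mpr this.symm
    rw [h2]; exact Submodule.coe_mem _
  -- the submodules
  set M : Submodule ℝ Y := LinearMap.ker (S : Y →ₗ[ℝ] Z) ⊓ LinearMap.range (T : X →ₗ[ℝ] Y) with hM_def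
  set Ge : Submodule ℝ Y :=
    LinearMap.ker (e : Y →ₗ[ℝ] Y) ⊓ LinearMap.ker ((q - ContinuousLinearMap.id ℝ Y : Y →L[ℝ] Y) : Y →ₗ[ℝ] Y) with hGe_def
  have hGe_mem : ∀ y, y ∈ Ge ↔ e y = 0 ∧ q y = y := fun y => by
    rw [hGe_def]
    simp [Submodule.mem_inf, LinearMap.mem_ker, sub_eq_zero]
  set Nc : Submodule ℝ Z := LinearMap.ker ((f ∘L rS : Z →L[ℝ] Z) : Z →ₗ[ℝ] Z) with hNc_def
  have hNc_mem : ∀ z, z ∈ Nc ↔ f (rS z) = 0 := fun z => by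
    rw [hNc_def]
    simp [LinearMap.mem_ker]
  -- basic facts about the composition
  have hCsub : LinearMap.range ((S.comp T : X →L[ℝ] Z) : X →ₗ[ℝ] Z) ≤ LinearMap.range (S : Y →ₗ[ℝ] Z) := by
    rintro z ⟨x, rfl⟩; exact ⟨T x, rfl⟩
  have hfC : ∀ z ∈ LinearMap.range ((S.comp T : X →L[ℝ] Z) : X →ₗ[ℝ] Z), f z = z := by
    rintro z ⟨x, rfl⟩; exact hW1' x
  have hfrange : ∀ z, f z ∈ LinearMap.range ((S.comp T : X →L[ℝ] Z) : X →ₗ[ℝ] Z) := fun z => ⟨W z, rfl⟩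
  -- `Nc` is a complement of the range of `S ∘ T`
  have hNcCompl : IsCompl (LinearMap.range ((S.comp T : X →L[ℝ] Z) : X →ₗ[ℝ] Z)) Nc := by
    constructor
    · refine Submodule.disjoint_def.mpr fun z hz hzN => ?_
      have h1 : f (rS z) = 0 := (hNc_mem z).mp hzN
      rwa [hrSleft z (hCsub hz), hfC z hz] at h1
    · refine codisjoint_iff.mpr (Submodule.eq_top_iff'.mpr fun z => ?_)
      refine Submodule.mem_sup.mpr ⟨f (rS z), hfrange _, z - f (rS z), ?_, by abel⟩
      refine (hNc_mem _).mpr ?_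
      have hm : f (rS z) ∈ LinearMap.range (S : Y →ₗ[ℝ] Z) := hCsub (hfrange _)
      rw [map_sub, hrSleft (f (rS z)) hm, map_sub, hf2, sub_self]
  have hNcClosed : IsClosed ((Nc : Submodule ℝ Z) : Set Z) := by
    rw [hNc_def]; exact ContinuousLinearMap.isClosed_ker _
  -- E1 : ker (S∘T) ≃L ker T × M
  have hA1mem : ∀ x : ↥(LinearMap.ker ((S.comp T : X →L[ℝ] Z) : X →ₗ[ℝ] Z)),
      (((ContinuousLinearMap.id ℝ X - U ∘L T) ∘L
        (LinearMap.ker ((S.comp T : X →L[ℝ] Z) : X →ₗ[ℝ] Z)).subtypeL) x) ∈ LinearMap.ker (T : X →ₗ[ℝ] Y) := by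
    intro x
    simp [LinearMap.mem_ker, map_sub, hU1, -ContinuousLinearMap.toLinearMap_comp]
  have hB1mem : ∀ x : ↥(LinearMap.ker ((S.comp T : X →L[ℝ] Z) : X →ₗ[ℝ] Z)),
      ((T ∘L (LinearMap.ker ((S.comp T : X →L[ℝ] Z) : X →ₗ[ℝ] Z)).subtypeL) x) ∈ M := by
    intro x
    refine Submodule.mem_inf.mpr ⟨?_, ⟨(x : X), rfl⟩⟩
    have hx : S (T (x : X)) = 0 := LinearMap.mem_ker.mp x.2
    simpa [LinearMap.mem_ker, -ContinuousLinearMap.toLinearMap_comp] using hx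
  have hG1mem : ∀ km : ↥(LinearMap.ker (T : X →ₗ[ℝ] Y)) × ↥M,
      (((LinearMap.ker (T : X →ₗ[ℝ] Y)).subtypeL ∘L
          ContinuousLinearMap.fst ℝ ↥(LinearMap.ker (T : X →ₗ[ℝ] Y)) ↥M
        + U ∘L M.subtypeL ∘L
          ContinuousLinearMap.snd ℝ ↥(LinearMap.ker (T : X →ₗ[ℝ] Y)) ↥M) km)
        ∈ LinearMap.ker ((S.comp T : X →L[ℝ] Z) : X →ₗ[ℝ] Z) := by
    rintro ⟨k, m⟩
    have hk : T (k : X) = 0 := LinearMap.mem_ker.mp k.2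
    have hm1 : S (m : Y) = 0 := LinearMap.mem_ker.mp m.2.1
    have hm2 : T (U (m : Y)) = (m : Y) := hTU _ m.2.2
    simp [LinearMap.mem_ker, map_add, hk, hm2, hm1]
  have E1 : ↥(LinearMap.ker ((S.comp T : X →L[ℝ] Z) : X →ₗ[ℝ] Z)) ≃L[ℝ] (↥(LinearMap.ker (T : X →ₗ[ℝ] Y)) × ↥M) := by
    refine ContinuousLinearEquiv.equivOfInverse
      ((ContinuousLinearMap.codRestrict _ _ hA1mem).prod
        (ContinuousLinearMap.codRestrict _ _ hB1mem))
      (ContinuousLinearMap.codRestrict _ _ hG1mem) (fun x => ?_) (fun km => ?_)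
    · ext
      simp [-ContinuousLinearMap.toLinearMap_comp]
    · have hm2 : T (U (km.2 : Y)) = (km.2 : Y) := hTU _ km.2.2.2
      have hk : T (km.1 : X) = 0 := LinearMap.mem_ker.mp km.1.2
      refine Prod.ext (Subtype.ext ?_) (Subtype.ext ?_)
      · simp [map_add, hk, hm2, -ContinuousLinearMap.toLinearMap_comp]
      · simp [map_add, hk, hm2, -ContinuousLinearMap.toLinearMap_comp]
  -- more idempotent-type identities
  have hq2 : ∀ y, q (q y) = q y := fun y => congrArg V (hV1 y)
  have hpTright : ∀ y ∈ NT, pT y = 0 := fun y hy => by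
    rw [hpT_eq]
    have := Submodule.linearProjOfIsCompl_apply_right' hNTcompl hy
    exact congrArg Subtype.val this
  have hMr : ∀ y ∈ LinearMap.range (T : X →ₗ[ℝ] Y), y - e y ∈ M := by
    rintro y ⟨x, rfl⟩
    refine Submodule.mem_inf.mpr ⟨?_, ⟨x - W (S (T x)), by simp [map_sub, he]⟩⟩
    simp [LinearMap.mem_ker, he, map_sub, hW1']
  have heM : ∀ y ∈ M, e y = 0 := fun y hy => by
    have h1 : S y = 0 := LinearMap.mem_ker.mp (Submodule.mem_inf.mp hy).1
    rw [he, h1]; simp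
  have heRT : ∀ y, e y ∈ LinearMap.range (T : X →ₗ[ℝ] Y) := fun y => ⟨W (S y), rfl⟩
  -- E2 : M × NT ≃L ker e
  have hF2mem : ∀ mn : ↥M × ↥NT,
      ((M.subtypeL ∘L ContinuousLinearMap.fst ℝ ↥M ↥NT
        + (ContinuousLinearMap.id ℝ Y - e) ∘L NT.subtypeL ∘L
          ContinuousLinearMap.snd ℝ ↥M ↥NT) mn) ∈ LinearMap.ker (e : Y →ₗ[ℝ] Y) := by
    rintro ⟨m, n⟩
    have h1 : e (m : Y) = 0 := heM _ m.2
    simp [LinearMap.mem_ker, map_add, map_sub, h1, he2]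
  have hG2mem1 : ∀ y : ↥(LinearMap.ker (e : Y →ₗ[ℝ] Y)),
      (((ContinuousLinearMap.id ℝ Y - e) ∘L pT ∘L
        (LinearMap.ker (e : Y →ₗ[ℝ] Y)).subtypeL) y) ∈ M := by
    intro y
    simpa using hMr (pT (y : Y)) (hpTmem _)
  have hG2mem2 : ∀ y : ↥(LinearMap.ker (e : Y →ₗ[ℝ] Y)),
      (((ContinuousLinearMap.id ℝ Y - pT) ∘L
        (LinearMap.ker (e : Y →ₗ[ℝ] Y)).subtypeL) y) ∈ NT := by
    intro y
    simpa using hpTN (y : Y)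
  have E2 : (↥M × ↥NT) ≃L[ℝ] ↥(LinearMap.ker (e : Y →ₗ[ℝ] Y)) := by
    refine ContinuousLinearEquiv.equivOfInverse
      (ContinuousLinearMap.codRestrict _ _ hF2mem)
      ((ContinuousLinearMap.codRestrict _ _ hG2mem1).prod
        (ContinuousLinearMap.codRestrict _ _ hG2mem2))
      (fun mn => ?_) (fun y => ?_)
    · obtain ⟨m, n⟩ := mn
      have hm : pT (m : Y) = (m : Y) := hpTleft _ m.2.2
      have hn : pT (n : Y) = 0 := hpTright _ n.2
      have hen : pT (e (n : Y)) = e (n : Y) := hpTleft _ (heRT _)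
      have hem : e (m : Y) = 0 := heM _ m.2
      refine Prod.ext (Subtype.ext ?_) (Subtype.ext ?_)
      · simp only [ContinuousLinearMap.prod_apply, ContinuousLinearMap.coe_comp',
          Function.comp_apply, ContinuousLinearMap.coe_codRestrict_apply,
          Submodule.coe_subtypeL', Submodule.coe_subtype,
          ContinuousLinearMap.coe_sub', Pi.sub_apply,
          ContinuousLinearMap.add_apply, ContinuousLinearMap.id_apply,
          ContinuousLinearMap.coe_fst', ContinuousLinearMap.coe_snd']
        rw [map_add, map_sub, hm, hn, hen]
        rw [show (m : Y) + (0 - e (n : Y)) = (m : Y) - e (n : Y) by abel]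
        rw [map_sub, hem, he2]
        abel
      · simp only [ContinuousLinearMap.prod_apply, ContinuousLinearMap.coe_comp',
          Function.comp_apply, ContinuousLinearMap.coe_codRestrict_apply,
          Submodule.coe_subtypeL', Submodule.coe_subtype,
          ContinuousLinearMap.coe_sub', Pi.sub_apply,
          ContinuousLinearMap.add_apply, ContinuousLinearMap.id_apply,
          ContinuousLinearMap.coe_fst', ContinuousLinearMap.coe_snd']
        rw [map_add, map_sub, hm, hn, hen]
        abel
    · have hy : e (y : Y) = 0 := LinearMap.mem_ker.mp y.2
      refine Subtype.ext ?_
      simp only [ContinuousLinearMap.prod_apply, ContinuousLinearMap.coe_comp',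
        Function.comp_apply, ContinuousLinearMap.coe_codRestrict_apply,
        Submodule.coe_subtypeL', Submodule.coe_subtype,
        ContinuousLinearMap.coe_sub', Pi.sub_apply,
        ContinuousLinearMap.add_apply, ContinuousLinearMap.id_apply,
        ContinuousLinearMap.coe_fst', ContinuousLinearMap.coe_snd']
      rw [map_sub, hy]
      abel
  -- E3 : ker e ≃L ker S × Ge
  have hF3mem1 : ∀ y : ↥(LinearMap.ker (e : Y →ₗ[ℝ] Y)),
      (((ContinuousLinearMap.id ℝ Y - q) ∘L
        (LinearMap.ker (e : Y →ₗ[ℝ] Y)).subtypeL) y) ∈ LinearMap.ker (S : Y →ₗ[ℝ] Z) := by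
    intro y
    simp [LinearMap.mem_ker, map_sub, hq, hV1]
  have hF3mem2 : ∀ y : ↥(LinearMap.ker (e : Y →ₗ[ℝ] Y)),
      ((q ∘L (LinearMap.ker (e : Y →ₗ[ℝ] Y)).subtypeL) y) ∈ Ge := by
    intro y
    have hy : e (y : Y) = 0 := LinearMap.mem_ker.mp y.2
    refine (hGe_mem _).mpr ⟨?_, ?_⟩
    · show e (q (y : Y)) = 0
      have : e (q (y : Y)) = e (y : Y) := by
        rw [he, he, hq, hV1]
      rw [this, hy]
    · exact hq2 _
  have hG3mem : ∀ kg : ↥(LinearMap.ker (S : Y →ₗ[ℝ] Z)) × ↥Ge,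
      (((LinearMap.ker (S : Y →ₗ[ℝ] Z)).subtypeL ∘L
          ContinuousLinearMap.fst ℝ ↥(LinearMap.ker (S : Y →ₗ[ℝ] Z)) ↥Ge
        + Ge.subtypeL ∘L
          ContinuousLinearMap.snd ℝ ↥(LinearMap.ker (S : Y →ₗ[ℝ] Z)) ↥Ge) kg)
        ∈ LinearMap.ker (e : Y →ₗ[ℝ] Y) := by
    rintro ⟨k, g⟩
    have hk : S (k : Y) = 0 := LinearMap.mem_ker.mp k.2
    have hg : e (g : Y) = 0 := ((hGe_mem _).mp g.2).1
    have hek : e (k : Y) = 0 := by rw [he, hk]; simp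
    simp [LinearMap.mem_ker, map_add, hek, hg]
  have E3 : ↥(LinearMap.ker (e : Y →ₗ[ℝ] Y)) ≃L[ℝ] (↥(LinearMap.ker (S : Y →ₗ[ℝ] Z)) × ↥Ge) := by
    refine ContinuousLinearEquiv.equivOfInverse
      ((ContinuousLinearMap.codRestrict _ _ hF3mem1).prod
        (ContinuousLinearMap.codRestrict _ _ hF3mem2))
      (ContinuousLinearMap.codRestrict _ _ hG3mem)
      (fun y => ?_) (fun kg => ?_)
    · ext
      simp
    · obtain ⟨k, g⟩ := kg
      have hk : S (k : Y) = 0 := LinearMap.mem_ker.mp k.2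
      have hqk : q (k : Y) = 0 := by rw [hq, hk]; simp
      have hqg : q (g : Y) = (g : Y) := ((hGe_mem _).mp g.2).2
      refine Prod.ext (Subtype.ext ?_) (Subtype.ext ?_)
      · simp [map_add, hqk, hqg]
      · simp [map_add, hqk, hqg]
  -- E5 : NS × Ge ≃L Nc
  have hTW0 : ∀ d ∈ LinearMap.range (S : Y →ₗ[ℝ] Z), S (T (W d)) = 0 → T (W d) = 0 := by
    rintro d ⟨y, rfl⟩ h0
    have h1 : e (e y) = 0 := by
      rw [he (e y), show S (e y) = 0 from h0]
      simp
    rw [he2] at h1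
    exact h1
  have hF5mem : ∀ ng : ↥NS × ↥Ge,
      ((NS.subtypeL ∘L ContinuousLinearMap.fst ℝ ↥NS ↥Ge
        + S ∘L Ge.subtypeL ∘L
          ContinuousLinearMap.snd ℝ ↥NS ↥Ge) ng) ∈ Nc := by
    rintro ⟨n, g⟩
    have hg : e (g : Y) = 0 := ((hGe_mem _).mp g.2).1
    refine (hNc_mem _).mpr ?_
    rw [show ((NS.subtypeL ∘L ContinuousLinearMap.fst ℝ ↥NS ↥Ge
        + S ∘L Ge.subtypeL ∘L
          ContinuousLinearMap.snd ℝ ↥NS ↥Ge) (n, g)) = (n : Z) + S (g : Y) by simp]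
    rw [map_add, hrSright _ n.2, hrSleft (S (g : Y)) ⟨(g : Y), rfl⟩, zero_add]
    show S (T (W (S (g : Y)))) = 0
    have : T (W (S (g : Y))) = 0 := hg
    rw [this]; simp
  have hG5mem1 : ∀ z : ↥Nc,
      (((ContinuousLinearMap.id ℝ Z - rS) ∘L Nc.subtypeL) z) ∈ NS := by
    intro z
    simpa using hrSN (z : Z)
  have hG5mem2 : ∀ z : ↥Nc,
      ((V ∘L rS ∘L Nc.subtypeL) z) ∈ Ge := by
    intro z
    have hz : f (rS (z : Z)) = 0 := (hNc_mem _).mp z.2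
    refine (hGe_mem _).mpr ⟨?_, ?_⟩
    · show e (V (rS (z : Z))) = 0
      rw [he, hSV _ (hrSmem _)]
      exact hTW0 _ (hrSmem _) hz
    · exact hV2 _
  have E5 : (↥NS × ↥Ge) ≃L[ℝ] ↥Nc := by
    refine ContinuousLinearEquiv.equivOfInverse
      (ContinuousLinearMap.codRestrict _ _ hF5mem)
      ((ContinuousLinearMap.codRestrict _ _ hG5mem1).prod
        (ContinuousLinearMap.codRestrict _ _ hG5mem2))
      (fun ng => ?_) (fun z => ?_)
    · obtain ⟨n, g⟩ := ng
      have hg : q (g : Y) = (g : Y) := ((hGe_mem _).mp g.2).2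
      have hrs : rS ((n : Z) + S (g : Y)) = S (g : Y) := by
        rw [map_add, hrSright _ n.2, hrSleft (S (g : Y)) ⟨(g : Y), rfl⟩, zero_add]
      refine Prod.ext (Subtype.ext ?_) (Subtype.ext ?_)
      · simp only [ContinuousLinearMap.prod_apply, ContinuousLinearMap.coe_comp',
          Function.comp_apply, ContinuousLinearMap.coe_codRestrict_apply,
          Submodule.coe_subtypeL', Submodule.coe_subtype,
          ContinuousLinearMap.coe_sub', Pi.sub_apply,
          ContinuousLinearMap.add_apply, ContinuousLinearMap.id_apply,
          ContinuousLinearMap.coe_fst', ContinuousLinearMap.coe_snd']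
        rw [hrs]
        abel
      · simp only [ContinuousLinearMap.prod_apply, ContinuousLinearMap.coe_comp',
          Function.comp_apply, ContinuousLinearMap.coe_codRestrict_apply,
          Submodule.coe_subtypeL', Submodule.coe_subtype,
          ContinuousLinearMap.coe_sub', Pi.sub_apply,
          ContinuousLinearMap.add_apply, ContinuousLinearMap.id_apply,
          ContinuousLinearMap.coe_fst', ContinuousLinearMap.coe_snd']
        rw [hrs]
        exact hg
    · refine Subtype.ext ?_
      simp only [ContinuousLinearMap.prod_apply, ContinuousLinearMap.coe_comp',
        Function.comp_apply, ContinuousLinearMap.coe_codRestrict_apply,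
        Submodule.coe_subtypeL', Submodule.coe_subtype,
        ContinuousLinearMap.coe_sub', Pi.sub_apply,
        ContinuousLinearMap.add_apply, ContinuousLinearMap.id_apply,
        ContinuousLinearMap.coe_fst', ContinuousLinearMap.coe_snd']
      rw [hSV _ (hrSmem _)]
      abel
  -- assemble everything
  refine ⟨hST, Nc, hNcClosed, hNcCompl, ⟨?_⟩⟩
  exact E1.trans ((iT.prodCongr (ContinuousLinearEquiv.refl ℝ ↥M)).trans
    ((ContinuousLinearEquiv.prodComm ℝ ↥NT ↥M).trans (E2.trans (E3.trans
      ((iS.prodCongr (ContinuousLinearEquiv.refl ℝ ↥Ge)).trans E5)))))
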